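/- Let x ∈ {0,1}ⁿ, and define x̄ = (1, x₁, x₁, 1, 1, x₂, x₂, 1, …, 1, x_n, x_n, 1) ∈ {0,1,2}^{4n}, and for i ∈ [n] define ȳ_i to be x̄ with its (4(i−1)+3)-th coordinate increased by 1. Then dtw(x̄, ȳ_i) = 0 if x_i = 0, and dtw(x̄, ȳ_i) = 1 if x_i = 1, where dtw uses distance d(a,b)=|a−b| on integers. -/

import Mathlib

/-- `xb` is an expansion of `x`: each letter of `x` is duplicated in place a positive
number of times. -/
def IsExpansion {α : Type*} (x xb : List α) : Prop :=
  ∃ ks : List ℕ, ks.length = x.length ∧ (∀ k ∈ ks, 0 < k) ∧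
    xb = (List.zipWith (fun a k => List.replicate k a) x ks).flatten

/-- `(xb, yb)` is a correspondence between `x` and `y`: a pair of equal-length expansions. -/
def IsCorrespondence {α : Type*} (x y xb yb : List α) : Prop :=
  IsExpansion x xb ∧ IsExpansion y yb ∧ xb.length = yb.length

/-- The cost of a correspondence: summed distances of aligned letters. -/
noncomputable def corrCost {α : Type*} (δ : α → α → ℝ) (xb yb : List α) : ℝ :=
  (List.zipWith δ xb yb).sum

/-- Dynamic time warping distance with respect to a distance function `δ`. -/
noncomputable def dtw {α : Type*} (δ : α → α → ℝ) (x y : List α) : ℝ :=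
  sInf {c | ∃ xb yb, IsCorrespondence x y xb yb ∧ c = corrCost δ xb yb}

/-- Generalized Hamming distance on letters. -/
noncomputable def hamDist {α : Type*} [DecidableEq α] (a b : α) : ℝ := if a = b then 0 else 1

/-- DTW over generalized Hamming space. -/
noncomputable def dtw0 {α : Type*} [DecidableEq α] (x y : List α) : ℝ := dtw hamDist x y

/-- x̄ = (1, x₁, x₁, 1, 1, x₂, x₂, 1, …, 1, x_n, x_n, 1), with bits as integers. -/
def xbar (n : ℕ) (x : Fin n → Bool) : List ℤ :=
  (List.ofFn fun j : Fin n =>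
    [1, if x j then 1 else 0, if x j then 1 else 0, 1]).flatten

/-- ȳ_i equals x̄ except that the letter at position 4(i−1)+3 is x_i + 1. -/
def ybar (n : ℕ) (x : Fin n → Bool) (i : Fin n) : List ℤ :=
  (List.ofFn fun j : Fin n =>
    if j = i then [1, if x j then 1 else 0, (if x j then 1 else 0) + 1, 1]
    else [1, if x j then 1 else 0, if x j then 1 else 0, 1]).flatten

lemma exists_of_mem_zipWith' {α β γ : Type*} {f : α → β → γ} :
    ∀ {l1 : List α} {l2 : List β} {c : γ}, c ∈ List.zipWith f l1 l2 →
      ∃ a b, a ∈ l1 ∧ b ∈ l2 ∧ c = f a b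
  | a :: l1, b :: l2, c, h => by
    rcases List.mem_cons.1 h with h | h
    · exact ⟨a, b, List.mem_cons_self .., List.mem_cons_self .., h⟩
    · obtain ⟨a', b', ha, hb, hc⟩ := exists_of_mem_zipWith' h
      exact ⟨a', b', List.mem_cons_of_mem _ ha, List.mem_cons_of_mem _ hb, hc⟩

lemma isExpansion_refl {α : Type*} (l : List α) : IsExpansion l l := by
  refine ⟨List.replicate l.length 1, by simp, by simp, ?_⟩
  induction l with
  | nil => rfl
  | cons a t ih => simp [List.replicate_succ]; exact ih

lemma mem_of_isExpansion {α : Type*} {x xb : List α} (h : IsExpansion x xb)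
    {a : α} (ha : a ∈ xb) : a ∈ x := by
  obtain ⟨ks, _, _, rfl⟩ := h
  obtain ⟨l, hl, hal⟩ := List.mem_flatten.1 ha
  obtain ⟨b, c, hb, _, rfl⟩ := exists_of_mem_zipWith' hl
  rwa [List.eq_of_mem_replicate hal]

lemma mem_isExpansion {α : Type*} {x xb : List α} (h : IsExpansion x xb)
    {a : α} (ha : a ∈ x) : a ∈ xb := by
  obtain ⟨ks, hlen, hpos, rfl⟩ := h
  rw [List.mem_flatten]
  obtain ⟨n, hn, rfl⟩ := List.mem_iff_get.1 ha
  refine ⟨List.replicate (ks.get ⟨n, by omega⟩) (x.get n), ?_, ?_⟩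
  · rw [List.mem_iff_get]
    refine ⟨⟨n, by simp [hlen]⟩, ?_⟩
    simp [List.getElem_zipWith]
  · exact List.mem_replicate.2 ⟨Nat.pos_iff_ne_zero.1 (hpos _ (List.get_mem ..)), rfl⟩

lemma isExpansion_append {α : Type*} {x y xb yb : List α}
    (hx : IsExpansion x xb) (hy : IsExpansion y yb) :
    IsExpansion (x ++ y) (xb ++ yb) := by
  obtain ⟨ks, hl, hp, rfl⟩ := hx
  obtain ⟨ks', hl', hp', rfl⟩ := hy
  refine ⟨ks ++ ks', by simp [hl, hl'], ?_, ?_⟩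
  · intro k hk; rcases List.mem_append.1 hk with h | h
    · exact hp _ h
    · exact hp' _ h
  · rw [List.zipWith_append hl.symm, List.flatten_append]

lemma isExpansion_flatten_ofFn {α : Type*} {n : ℕ} {f g : Fin n → List α}
    (h : ∀ j, IsExpansion (f j) (g j)) :
    IsExpansion (List.ofFn f).flatten (List.ofFn g).flatten := by
  induction n with
  | zero => simpa using isExpansion_refl []
  | succ m ih =>
    rw [List.ofFn_succ, List.ofFn_succ, List.flatten_cons, List.flatten_cons]
    exact isExpansion_append (h 0) (ih (fun j => h j.succ))

lemma corrCost_nonneg (xb yb : List ℤ) : 0 ≤ corrCost dist xb yb := by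
  apply List.sum_nonneg
  intro r hr
  obtain ⟨a, b, _, _, rfl⟩ := exists_of_mem_zipWith' hr
  exact dist_nonneg

lemma sum_zipWith_flatten (f : ℤ → ℤ → ℝ) :
    ∀ (L M : List (List ℤ)), L.length = M.length →
      (∀ k (h1 : k < L.length) (h2 : k < M.length), (L.get ⟨k, h1⟩).length = (M.get ⟨k, h2⟩).length) →
      (List.zipWith f L.flatten M.flatten).sum
        = (List.zipWith (fun a b => (List.zipWith f a b).sum) L M).sum
  | [], [], _, _ => by simp
  | a :: L, b :: M, hl, hlen => by
    rw [List.flatten_cons, List.flatten_cons,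
      List.zipWith_append (show a.length = b.length from hlen 0 (by simp) (by simp)), List.sum_append,
      List.zipWith_cons_cons, List.sum_cons,
      sum_zipWith_flatten f L M (by simpa using hl)
        (fun k h1 h2 => hlen (k+1) (by simpa using h1) (by simpa using h2))]

lemma zipWith_ofFn {α β γ : Type*} {n : ℕ} (f : α → β → γ) (g : Fin n → α) (h : Fin n → β) :
    List.zipWith f (List.ofFn g) (List.ofFn h) = List.ofFn (fun j => f (g j) (h j)) := by
  apply List.ext_getElem <;> simp

lemma sum_zipWith_dist_self (l : List ℤ) : (List.zipWith dist l l).sum = 0 := by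
  induction l with
  | nil => simp
  | cons a t ih => simp [ih]

lemma mem_xbar {n : ℕ} {x : Fin n → Bool} {a : ℤ} (ha : a ∈ xbar n x) : a = 0 ∨ a = 1 := by
  obtain ⟨l, hl, hal⟩ := List.mem_flatten.1 ha
  obtain ⟨j, rfl⟩ := List.mem_ofFn.1 hl
  simp only [List.mem_cons, List.mem_singleton] at hal
  rcases hal with rfl | rfl | rfl | h
  · right; rfl
  · split <;> simp
  · split <;> simp
  · simp at h; right; exact h

/-- dtw(x̄, ȳ_i) = 0 if x_i = 0 and dtw(x̄, ȳ_i) = 1 if x_i = 1. -/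
theorem dtw_linear_sketch_gadget (n : ℕ) (x : Fin n → Bool) (i : Fin n) :
    dtw dist (xbar n x) (ybar n x i) = if x i then 1 else 0 := by
  set S : Set ℝ := {c | ∃ xb yb, IsCorrespondence (xbar n x) (ybar n x i) xb yb ∧ c = corrCost dist xb yb} with hS
  have hbdd : BddBelow S := by
    refine ⟨0, fun c hc => ?_⟩
    obtain ⟨xb, yb, _, rfl⟩ := hc
    exact corrCost_nonneg xb yb
  have hlenbar : (xbar n x).length = (ybar n x i).length := by
    simp only [xbar, ybar, List.length_flatten, List.map_ofFn]
    rw [List.sum_ofFn, List.sum_ofFn]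
    refine Finset.sum_congr rfl fun j _ => ?_
    simp only [Function.comp]
    split <;> split <;> rfl
  by_cases hx : x i
  · -- cost-1 correspondence : the identity one
    have hub : (1 : ℝ) ∈ S := by
      refine ⟨xbar n x, ybar n x i, ⟨isExpansion_refl _, isExpansion_refl _, hlenbar⟩, ?_⟩
      rw [corrCost, xbar, ybar,
        sum_zipWith_flatten _ _ _ (by simp) (by intro k h1 h2; simp at h1 h2 ⊢; split <;> rfl),
        zipWith_ofFn, List.sum_ofFn]
      have : ∀ j : Fin n,
          (List.zipWith dist [(1:ℤ), if x j then 1 else 0, if x j then 1 else 0, 1]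
            (if j = i then [1, if x j then 1 else 0, (if x j then 1 else 0) + 1, 1]
             else [1, if x j then 1 else 0, if x j then 1 else 0, 1])).sum
          = if j = i then 1 else 0 := by
        intro j
        by_cases hj : j = i
        · subst hj
          simp [hx, Int.dist_eq]
          norm_num
        · simp [hj, sum_zipWith_dist_self]
      rw [Finset.sum_congr rfl (fun j _ => this j)]
      simp
    have hlb : ∀ c ∈ S, (1:ℝ) ≤ c := by
      rintro c ⟨xb, yb, ⟨hex, hey, hlen⟩, rfl⟩
      have h2y : (2:ℤ) ∈ ybar n x i := by
        apply List.mem_flatten.2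
        refine ⟨_, List.mem_ofFn.2 ⟨i, rfl⟩, ?_⟩
        simp [hx]
      have h2 : (2:ℤ) ∈ yb := mem_isExpansion hey h2y
      obtain ⟨k, hk, hget⟩ := List.mem_iff_getElem.1 h2
      have hkx : k < xb.length := by omega
      have hmem : dist (xb[k]'hkx) (2:ℤ) ∈ List.zipWith dist xb yb := by
        have hkz : k < (List.zipWith dist xb yb).length := by
          rw [List.length_zipWith]; omega
        have := List.getElem_zipWith (f := dist) (i := k) (h := hkz)
        rw [hget] at this
        exact this ▸ List.getElem_mem hkz
      have h01 : xb[k]'hkx = 0 ∨ xb[k]'hkx = 1 :=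
        mem_xbar (mem_of_isExpansion hex (List.getElem_mem hkx))
      have h1d : (1:ℝ) ≤ dist (xb[k]'hkx) (2:ℤ) := by
        rcases h01 with h | h <;> rw [h] <;> simp [Int.dist_eq] <;> norm_num
      calc (1:ℝ) ≤ dist (xb[k]'hkx) (2:ℤ) := h1d
        _ ≤ (List.zipWith dist xb yb).sum := by
            apply List.single_le_sum _ _ hmem
            intro r hr
            obtain ⟨a, b, _, _, rfl⟩ := exists_of_mem_zipWith' hr
            exact dist_nonneg
    simp only [hx, if_true]
    exact le_antisymm (csInf_le hbdd hub) (le_csInf ⟨1, hub⟩ hlb)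
  · -- cost-0 correspondence
    have hub : (0 : ℝ) ∈ S := by
      set zb : List ℤ := (List.ofFn fun j : Fin n =>
        if j = i then [1, 0, 0, 1, 1] else [1, if x j then 1 else 0, if x j then 1 else 0, 1]).flatten with hzb
      have hzx : IsExpansion (xbar n x) zb := by
        apply isExpansion_flatten_ofFn
        intro j
        by_cases hj : j = i
        · subst hj
          simp only [if_pos rfl, hx, if_false]
          exact ⟨[1,1,1,2], rfl, by decide, rfl⟩
        · simp only [if_neg hj]
          exact isExpansion_refl _
      have hzy : IsExpansion (ybar n x i) zb := by
        apply isExpansion_flatten_ofFn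
        intro j
        by_cases hj : j = i
        · subst hj
          simp only [if_pos rfl, hx, if_false]
          exact ⟨[1,2,1,1], rfl, by decide, rfl⟩
        · simp only [if_neg hj]
          exact isExpansion_refl _
      exact ⟨zb, zb, ⟨hzx, hzy, rfl⟩, (sum_zipWith_dist_self zb).symm⟩
    have hlb : ∀ c ∈ S, (0:ℝ) ≤ c := by
      rintro c ⟨xb, yb, _, rfl⟩
      exact corrCost_nonneg xb yb
    simp only [hx, if_false]
    exact le_antisymm (csInf_le hbdd hub) (le_csInf ⟨0, hub⟩ hlb)
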